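/- Let θ : ℝ² → ℝ satisfy θ ∈ L²(ℝ²), ∇θ ∈ L²(ℝ²), and ∇θ ∈ L^∞(ℝ²). Then θ ∈ L^∞(ℝ²) and ‖θ‖_{L^∞} ≤ 6^{1/3} · ‖∇θ‖_{L^∞}^{1/3} · ‖θ‖_{L²}^{1/3} · ‖∇θ‖_{L²}^{1/3}. -/

import Mathlib

open MeasureTheory

open scoped ENNReal NNReal

noncomputable section LinftyAux

namespace LinftyAux

abbrev E2 := EuclideanSpace ℝ (Fin 2)

def e0 : E2 := EuclideanSpace.single 0 1
def e1 : E2 := EuclideanSpace.single 1 1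

lemma norm_e0 : ‖e0‖ = 1 := by simp [e0, EuclideanSpace.norm_single]
lemma norm_e1 : ‖e1‖ = 1 := by simp [e1, EuclideanSpace.norm_single]

/-- A continuous `ℝ≥0∞`-valued function is everywhere bounded by its essential sup. -/
lemma cont_le_essSup {f : E2 → ℝ≥0∞} (hf : Continuous f) (x : E2) :
    f x ≤ essSup f volume := by
  by_contra h
  push_neg at h
  have h0 : (volume : Measure E2) {y | ¬ f y ≤ essSup f volume} = 0 :=
    ae_iff.mp (ENNReal.ae_le_essSup f)
  have hopen : IsOpen {y | essSup f volume < f y} := isOpen_lt continuous_const hf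
  have hpos := hopen.measure_pos (volume : Measure E2) ⟨x, h⟩
  have : {y | ¬ f y ≤ essSup f volume} = {y | essSup f volume < f y} := by
    ext y; simp [not_le]
  rw [this] at h0
  rw [h0] at hpos
  exact lt_irrefl _ hpos

/-- FTC bound for powers along a `C¹` curve. -/
lemma ftc_pow {g g' : ℝ → ℝ} (hg : ∀ t, HasDerivAt g (g' t) t) (hg' : Continuous g')
    (n : ℕ) {T : ℝ} (hT : 0 ≤ T) :
    |g 0| ^ (n + 1) ≤ |g T| ^ (n + 1) +
      ∫ t in (0:ℝ)..T, ((n : ℝ) + 1) * |g t| ^ n * |g' t| := by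
  have hgc : Continuous g := by
    rw [continuous_iff_continuousAt]; exact fun t => (hg t).continuousAt
  have hder : ∀ t ∈ Set.uIcc (0:ℝ) T,
      HasDerivAt (fun u => g u ^ (n + 1)) ((((n:ℝ) + 1) * g t ^ n) * g' t) t := by
    intro t _
    have := (hg t).fun_pow (n + 1)
    simpa [Nat.cast_add, Nat.add_sub_cancel] using this
  have hcont : Continuous fun t => (((n:ℝ) + 1) * g t ^ n) * g' t :=
    ((continuous_const.mul (hgc.pow n)).mul hg')
  have hint : IntervalIntegrable (fun t => (((n:ℝ) + 1) * g t ^ n) * g' t) volume 0 T :=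
    hcont.intervalIntegrable _ _
  have heq := intervalIntegral.integral_eq_sub_of_hasDerivAt hder hint
  have h0 : g 0 ^ (n + 1) = g T ^ (n + 1) -
      ∫ t in (0:ℝ)..T, (((n:ℝ) + 1) * g t ^ n) * g' t := by
    rw [heq]; ring
  have habs : |g 0| ^ (n+1) ≤ |g T| ^ (n+1) +
      |∫ t in (0:ℝ)..T, (((n:ℝ) + 1) * g t ^ n) * g' t| := by
    rw [← abs_pow, ← abs_pow, h0]
    exact (abs_sub _ _)
  refine habs.trans (add_le_add_right ?_ _)
  have h1 : |∫ t in (0:ℝ)..T, (((n:ℝ) + 1) * g t ^ n) * g' t|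
      ≤ ∫ t in (0:ℝ)..T, |(((n:ℝ) + 1) * g t ^ n) * g' t| :=
    intervalIntegral.abs_integral_le_integral_abs hT
  refine h1.trans (le_of_eq ?_)
  apply intervalIntegral.integral_congr
  intro t _
  simp only [abs_mul, abs_pow]
  rw [abs_of_nonneg (show (0:ℝ) ≤ (n:ℝ) + 1 by positivity)]

/-- Key 1-dimensional estimate with a vanishing sequence at infinity. -/
lemma key {g g' : ℝ → ℝ} (hg : ∀ t, HasDerivAt g (g' t) t) (hg' : Continuous g') (n : ℕ)
    (hlim : ∀ ε > (0:ℝ), ∃ t ≥ (0:ℝ), |g t| < ε) :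
    ENNReal.ofReal (|g 0| ^ (n + 1)) ≤
      ∫⁻ t in Set.Ioi (0:ℝ), ENNReal.ofReal (((n:ℝ) + 1) * |g t| ^ n * |g' t|) := by
  have hgc : Continuous g := by
    rw [continuous_iff_continuousAt]; exact fun t => (hg t).continuousAt
  refine ENNReal.le_of_forall_pos_le_add ?_
  intro ε hε _
  obtain ⟨t, ht0, htε⟩ := hlim (min ε 1) (lt_min (by exact_mod_cast hε) one_pos)
  have habs0 : 0 ≤ |g t| := abs_nonneg _
  have hsmall : |g t| ^ (n + 1) ≤ (ε : ℝ) := by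
    have h1 : |g t| ≤ 1 := le_of_lt (lt_of_lt_of_le htε (min_le_right _ _))
    have h2 : |g t| ^ (n+1) ≤ |g t| ^ 1 :=
      pow_le_pow_of_le_one habs0 h1 (by omega)
    have h3 : |g t| ≤ (ε : ℝ) := le_of_lt (lt_of_lt_of_le htε (min_le_left _ _))
    calc |g t| ^ (n+1) ≤ |g t| ^ 1 := h2
      _ = |g t| := pow_one _
      _ ≤ (ε : ℝ) := h3
  have hftc := ftc_pow hg hg' n ht0
  have hcont : Continuous fun u => ((n:ℝ) + 1) * |g u| ^ n * |g' u| :=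
    (continuous_const.mul (hgc.abs.pow n)).mul hg'.abs
  calc ENNReal.ofReal (|g 0| ^ (n + 1))
      ≤ ENNReal.ofReal (|g t| ^ (n+1) +
          ∫ u in (0:ℝ)..t, ((n:ℝ) + 1) * |g u| ^ n * |g' u|) := ENNReal.ofReal_le_ofReal hftc
    _ ≤ ENNReal.ofReal (|g t| ^ (n+1)) +
          ENNReal.ofReal (∫ u in (0:ℝ)..t, ((n:ℝ) + 1) * |g u| ^ n * |g' u|) :=
        ENNReal.ofReal_add_le
    _ ≤ (∫⁻ u in Set.Ioi (0:ℝ), ENNReal.ofReal (((n:ℝ) + 1) * |g u| ^ n * |g' u|)) + ε := by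
        rw [add_comm]
        refine add_le_add ?_ ?_
        · rw [intervalIntegral.integral_of_le ht0,
            ofReal_integral_eq_lintegral_ofReal hcont.integrableOn_Ioc
              (Filter.Eventually.of_forall fun u => by positivity)]
          exact lintegral_mono_set Set.Ioc_subset_Ioi_self
        · exact (ENNReal.ofReal_le_ofReal hsmall).trans_eq ENNReal.ofReal_coe_nnreal

/-- The standard parametrization of the plane adapted to `x₀`. -/
def Φ (x₀ : E2) (p : ℝ × ℝ) : E2 := x₀ + (p.1 • e0 + p.2 • e1)

/-- A swapped variant. -/
def Ψ (x₀ : E2) (p : ℝ × ℝ) : E2 := x₀ + (p.1 • e1 + p.2 • e0)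

lemma Φ_cont (x₀ : E2) : Continuous (Φ x₀) := by
  apply continuous_const.add
  exact (continuous_fst.smul continuous_const).add (continuous_snd.smul continuous_const)

lemma symm_eq (t s : ℝ) :
    (MeasurableEquiv.toLp 2 (Fin 2 → ℝ)) ((MeasurableEquiv.finTwoArrow).symm (t, s))
      = t • e0 + s • e1 := by
  ext i
  fin_cases i <;>
    simp [MeasurableEquiv.coe_toLp, MeasurableEquiv.finTwoArrow,
      e0, e1, EuclideanSpace.single_apply]

lemma Φ_mp (x₀ : E2) :
    MeasurePreserving (Φ x₀) ((volume : Measure ℝ).prod volume) volume := by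
  have h1 : MeasurePreserving (MeasurableEquiv.toLp 2 (Fin 2 → ℝ)) volume volume :=
    (EuclideanSpace.volume_preserving_symm_measurableEquiv_toLp (Fin 2)).symm _
  have h2 : MeasurePreserving ((MeasurableEquiv.finTwoArrow (α := ℝ)).symm)
      volume volume := (volume_preserving_finTwoArrow ℝ).symm _
  have h3 : MeasurePreserving (fun y : E2 => x₀ + y) volume volume :=
    measurePreserving_add_left volume x₀
  have hcomp := (h3.comp h1).comp h2
  have hfun : Φ x₀ = (fun y : E2 => x₀ + y) ∘
      (MeasurableEquiv.toLp 2 (Fin 2 → ℝ)) ∘ (MeasurableEquiv.finTwoArrow).symm := by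
    funext p
    simp only [Φ, Function.comp_apply]
    rw [show p = (p.1, p.2) from rfl, symm_eq]
  rw [hfun]
  have : (volume : Measure (ℝ × ℝ)) = (volume : Measure ℝ).prod volume := Measure.volume_eq_prod _ _
  rw [← this]
  exact hcomp

lemma Ψ_mp (x₀ : E2) :
    MeasurePreserving (Ψ x₀) ((volume : Measure ℝ).prod volume) volume := by
  have : Ψ x₀ = (Φ x₀) ∘ Prod.swap := by
    funext p; simp [Ψ, Φ, add_comm (p.2 • e0)]
  rw [this]
  exact (Φ_mp x₀).comp Measure.measurePreserving_swap

lemma Φ_dist (x₀ : E2) (t s : ℝ) : dist (Φ x₀ (t, s)) (Φ x₀ (t, 0)) ≤ |s| := by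
  rw [dist_eq_norm]
  have : Φ x₀ (t, s) - Φ x₀ (t, 0) = s • e1 := by
    simp only [Φ, zero_smul, add_zero]
    abel
  rw [this, norm_smul, norm_e1, Real.norm_eq_abs, mul_one]

lemma Ψ_dist (x₀ : E2) (t s : ℝ) : dist (Ψ x₀ (t, s)) (Ψ x₀ (t, 0)) ≤ |s| := by
  rw [dist_eq_norm]
  have : Ψ x₀ (t, s) - Ψ x₀ (t, 0) = s • e0 := by
    simp only [Ψ, zero_smul, add_zero]
    abel
  rw [this, norm_smul, norm_e0, Real.norm_eq_abs, mul_one]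

/-- Along any parametrized ray, a Lipschitz `L²` function gets arbitrarily small. -/
lemma ray_liminf {θ : E2 → ℝ} {K : ℝ≥0} (hlip : LipschitzWith K θ) (hK : 0 < (K:ℝ))
    (hθ2 : ∫⁻ x, ((‖θ x‖₊ : ℝ≥0∞)) ^ (2:ℕ) ∂volume ≠ ⊤)
    (φ : ℝ × ℝ → E2) (hφ : MeasurePreserving φ ((volume : Measure ℝ).prod volume) volume)
    (hdist : ∀ t s, dist (φ (t, s)) (φ (t, 0)) ≤ |s|) :
    ∀ ε > (0:ℝ), ∃ t ≥ (0:ℝ), |θ (φ (t, 0))| < ε := by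
  intro ε hε
  by_contra hcon
  push_neg at hcon
  set δ := ε / (2 * K) with hδdef
  have hδpos : 0 < δ := by positivity
  have hKδ : (K:ℝ) * δ = ε / 2 := by
    rw [hδdef]; field_simp
  have hlow : ∀ t s : ℝ, 0 ≤ t → |s| < δ → ε / 2 ≤ |θ (φ (t, s))| := by
    intro t s ht hs
    have h1 : ε ≤ |θ (φ (t, 0))| := hcon t ht
    have h2 : |θ (φ (t, s)) - θ (φ (t, 0))| ≤ (K:ℝ) * |s| := by
      have h3 := hlip.dist_le_mul (φ (t, s)) (φ (t, 0))
      rw [Real.dist_eq] at h3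
      exact h3.trans (by
        have := hdist t s
        nlinarith [K.coe_nonneg])
    have h4 : (K:ℝ) * |s| ≤ ε / 2 := by
      calc (K:ℝ) * |s| ≤ (K:ℝ) * δ := by nlinarith [K.coe_nonneg]
        _ = ε / 2 := hKδ
    have h5 := abs_sub_abs_le_abs_sub (θ (φ (t, 0))) (θ (φ (t, s)))
    rw [abs_sub_comm] at h5
    linarith
  have hθc : Continuous θ := hlip.continuous
  have hmeas : Measurable fun x : E2 => ((‖θ x‖₊ : ℝ≥0∞)) ^ (2:ℕ) :=
    (ENNReal.continuous_coe.comp hθc.nnnorm).measurable.pow_const 2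
  have hcomp : ∫⁻ z, ((‖θ (φ z)‖₊ : ℝ≥0∞)) ^ (2:ℕ) ∂((volume : Measure ℝ).prod volume)
      = ∫⁻ x, ((‖θ x‖₊ : ℝ≥0∞)) ^ (2:ℕ) ∂volume := hφ.lintegral_comp hmeas
  set S : Set (ℝ × ℝ) := Set.Ici (0:ℝ) ×ˢ Set.Ioo (-δ) δ with hSdef
  have hSvol : ((volume : Measure ℝ).prod volume) S = ⊤ := by
    rw [hSdef, Measure.prod_prod, Real.volume_Ici, Real.volume_Ioo]
    rw [ENNReal.top_mul]
    simp only [ne_eq, ENNReal.ofReal_eq_zero, not_le]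
    linarith
  have hlower : ∀ z ∈ S, ENNReal.ofReal ((ε/2)^2) ≤ ((‖θ (φ z)‖₊ : ℝ≥0∞)) ^ (2:ℕ) := by
    rintro ⟨t, s⟩ ⟨ht, hs⟩
    have h6 : ε/2 ≤ |θ (φ (t, s))| := hlow t s ht (abs_lt.2 ⟨hs.1, hs.2⟩)
    have h7 : ENNReal.ofReal (ε/2) ≤ (‖θ (φ (t,s))‖₊ : ℝ≥0∞) := by
      rw [← enorm_eq_nnnorm, Real.enorm_eq_ofReal_abs]
      exact ENNReal.ofReal_le_ofReal h6
    calc ENNReal.ofReal ((ε/2)^2) = ENNReal.ofReal (ε/2) ^ 2 :=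
          ENNReal.ofReal_pow (by positivity) 2
      _ ≤ _ := pow_le_pow_left' h7 2
  have htop : (⊤ : ℝ≥0∞) ≤ ∫⁻ x, ((‖θ x‖₊ : ℝ≥0∞)) ^ (2:ℕ) ∂volume := by
    rw [← hcomp]
    have h8 : (⊤:ℝ≥0∞) = ENNReal.ofReal ((ε/2)^2) * ((volume : Measure ℝ).prod volume) S := by
      rw [hSvol, ENNReal.mul_top]
      simp only [ne_eq, ENNReal.ofReal_eq_zero, not_le]
      positivity
    rw [h8, ← setLIntegral_const S (ENNReal.ofReal ((ε/2)^2))]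
    refine le_trans (setLIntegral_mono (hmeas.comp hφ.measurable) hlower) ?_
    exact setLIntegral_le_lintegral _ _
  exact hθ2 (top_le_iff.1 htop)

/-- Derivative of a function along a line. -/
lemma curve_deriv {θ : E2 → ℝ} (hθ : ContDiff ℝ 1 θ) (a v : E2) (t : ℝ) :
    HasDerivAt (fun t : ℝ => θ (a + t • v)) (fderiv ℝ θ (a + t • v) v) t := by
  have h1 : HasDerivAt (fun t : ℝ => a + t • v) v t := by
    simpa using ((hasDerivAt_id t).smul_const v).const_add a
  exact ((hθ.differentiable one_ne_zero) _).hasFDerivAt.comp_hasDerivAt t h1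

end LinftyAux

open LinftyAux

/-- Gagliardo–Nirenberg-type inequality on `ℝ²`:
`‖θ‖_{L^∞} ≤ 6^{1/3} ‖∇θ‖_{L^∞}^{1/3} ‖θ‖_{L²}^{1/3} ‖∇θ‖_{L²}^{1/3}`. -/
theorem linfty_interpolation (θ : EuclideanSpace ℝ (Fin 2) → ℝ)
    (hθ : ContDiff ℝ 1 θ)
    (hθ2 : MemLp θ 2 volume)
    (hgrad2 : MemLp (fun x => fderiv ℝ θ x) 2 volume)
    (hgradInf : MemLp (fun x => fderiv ℝ θ x) ⊤ volume) :
    MemLp θ ⊤ volume ∧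
      eLpNorm θ ⊤ volume ≤
        ENNReal.ofReal ((6 : ℝ) ^ ((1 : ℝ) / 3)) *
          (eLpNorm (fun x => fderiv ℝ θ x) ⊤ volume) ^ ((1 : ℝ) / 3) *
          (eLpNorm θ 2 volume) ^ ((1 : ℝ) / 3) *
          (eLpNorm (fun x => fderiv ℝ θ x) 2 volume) ^ ((1 : ℝ) / 3) := by
  classical
  set D : E2 → EuclideanSpace ℝ (Fin 2) →L[ℝ] ℝ := fun x => fderiv ℝ θ x with hD
  have hθc : Continuous θ := hθ.continuous
  have hDc : Continuous D := hθ.continuous_fderiv one_ne_zero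
  set L : ℝ≥0∞ := eLpNorm (fun x => fderiv ℝ θ x) ⊤ volume with hL
  have hLne : L ≠ ⊤ := hgradInf.2.ne
  -- pointwise bound on the gradient
  have hDle : ∀ x, (‖D x‖₊ : ℝ≥0∞) ≤ L := by
    intro x
    have hcont : Continuous fun x => (‖D x‖₊ : ℝ≥0∞) :=
      ENNReal.continuous_coe.comp hDc.nnnorm
    have h := cont_le_essSup hcont x
    rw [hL, eLpNorm_exponent_top]
    exact h
  set Lr : ℝ := L.toReal with hLr
  have hLrnn : 0 ≤ Lr := ENNReal.toReal_nonneg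
  have hDleR : ∀ x, ‖D x‖ ≤ Lr := by
    intro x
    have := ENNReal.toReal_mono hLne (hDle x)
    simpa using this
  -- Lipschitz constant
  set K : ℝ≥0 := L.toNNReal + 1 with hK
  have hKpos : 0 < (K:ℝ) := by
    have := (L.toNNReal).coe_nonneg
    rw [hK]; push_cast; linarith
  have hlip : LipschitzWith K θ := by
    apply lipschitzWith_of_nnnorm_fderiv_le (hθ.differentiable one_ne_zero)
    intro x
    have h1 : (‖D x‖₊ : ℝ≥0∞) ≤ (L.toNNReal : ℝ≥0∞) := by
      rw [ENNReal.coe_toNNReal hLne]; exact hDle x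
    have h2 : ‖D x‖₊ ≤ L.toNNReal := ENNReal.coe_le_coe.1 h1
    exact h2.trans le_self_add
  -- finiteness of the square integral
  have hsq_ne_top : ∫⁻ x, ((‖θ x‖₊ : ℝ≥0∞)) ^ (2:ℕ) ∂volume ≠ ⊤ := by
    have h := hθ2.2
    rw [eLpNorm_eq_lintegral_rpow_enorm_toReal two_ne_zero ENNReal.ofNat_ne_top] at h
    intro hcontra
    rw [show (fun x => ‖θ x‖ₑ ^ (ENNReal.toReal 2)) = fun x => ((‖θ x‖₊ : ℝ≥0∞)) ^ (2:ℕ)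
      from funext fun x => by
        rw [← ENNReal.rpow_natCast]; norm_num [enorm_eq_nnnorm]] at h
    rw [hcontra] at h
    simp [ENNReal.top_rpow_of_pos] at h
  -- the basic product function
  set F : E2 → ℝ≥0∞ := fun x => ((‖θ x‖₊ * ‖D x‖₊ : ℝ≥0) : ℝ≥0∞) with hF
  have hFc : Continuous F :=
    ENNReal.continuous_coe.comp (hθc.nnnorm.mul hDc.nnnorm)
  set I : ℝ≥0∞ := ∫⁻ x, F x ∂volume with hI
  -- the vertical 1-d estimate at any point
  have hvert : ∀ p : E2, ENNReal.ofReal (|θ p| ^ 2) ≤ ∫⁻ s : ℝ, 2 * F (p + s • e1) ∂volume := by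
    intro p
    set g : ℝ → ℝ := fun s => θ (p + s • e1) with hg
    set g' : ℝ → ℝ := fun s => D (p + s • e1) e1 with hg'
    have hgd : ∀ s, HasDerivAt g (g' s) s := fun s => curve_deriv hθ p e1 s
    have hcurve : Continuous fun s : ℝ => p + s • e1 :=
      continuous_const.add (continuous_id.smul continuous_const)
    have hg'c : Continuous g' := (hDc.comp hcurve).clm_apply continuous_const
    have hlim : ∀ ε > (0:ℝ), ∃ s ≥ (0:ℝ), |g s| < ε := by
      intro ε hε
      obtain ⟨s, hs0, hsε⟩ := ray_liminf hlip hKpos hsq_ne_top (Ψ p) (Ψ_mp p) (Ψ_dist p) ε hε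
      refine ⟨s, hs0, ?_⟩
      have hΨ0 : Ψ p (s, 0) = p + s • e1 := by simp [Ψ]
      rwa [hΨ0] at hsε
    have hkey := key hgd hg'c 1 hlim
    calc ENNReal.ofReal (|θ p| ^ 2)
        = ENNReal.ofReal (|g 0| ^ (1+1)) := by
          rw [show g 0 = θ p by simp [hg]]
      _ ≤ ∫⁻ s in Set.Ioi (0:ℝ), ENNReal.ofReal ((((1:ℕ):ℝ) + 1) * |g s| ^ 1 * |g' s|) := hkey
      _ ≤ ∫⁻ s in Set.Ioi (0:ℝ), 2 * F (p + s • e1) ∂volume := by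
          refine lintegral_mono fun s => ?_
          have hb : |g' s| ≤ ‖D (p + s • e1)‖ := by
            rw [hg']
            calc |D (p + s • e1) e1| ≤ ‖D (p + s • e1)‖ * ‖e1‖ :=
                  (D (p + s • e1)).le_opNorm e1
              _ = ‖D (p + s • e1)‖ := by rw [norm_e1, mul_one]
          calc ENNReal.ofReal ((((1:ℕ):ℝ) + 1) * |g s| ^ 1 * |g' s|)
              ≤ ENNReal.ofReal (2 * (|g s| * ‖D (p + s • e1)‖)) := by
                apply ENNReal.ofReal_le_ofReal
                have h0 : (0:ℝ) ≤ |g s| := abs_nonneg _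
                push_cast
                nlinarith [abs_nonneg (g' s)]
            _ = 2 * (ENNReal.ofReal (|g s|) * ENNReal.ofReal (‖D (p + s • e1)‖)) := by
                rw [ENNReal.ofReal_mul (by norm_num), ENNReal.ofReal_mul (abs_nonneg _),
                  ENNReal.ofReal_ofNat]
            _ = 2 * F (p + s • e1) := by
                simp only [hg, hF]
                rw [ENNReal.coe_mul]
                simp only [← enorm_eq_nnnorm, ← ofReal_norm, Real.norm_eq_abs]
      _ ≤ ∫⁻ s : ℝ, 2 * F (p + s • e1) ∂volume := setLIntegral_le_lintegral _ _
  -- the horizontal estimate: pointwise cube bound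
  have hpt : ∀ x₀ : E2, ENNReal.ofReal (|θ x₀| ^ 3) ≤ 6 * L * I := by
    intro x₀
    set g : ℝ → ℝ := fun t => θ (x₀ + t • e0) with hg
    set g' : ℝ → ℝ := fun t => D (x₀ + t • e0) e0 with hg'
    have hgd : ∀ t, HasDerivAt g (g' t) t := fun t => curve_deriv hθ x₀ e0 t
    have hcurve : Continuous fun t : ℝ => x₀ + t • e0 :=
      continuous_const.add (continuous_id.smul continuous_const)
    have hg'c : Continuous g' := (hDc.comp hcurve).clm_apply continuous_const
    have hlim : ∀ ε > (0:ℝ), ∃ t ≥ (0:ℝ), |g t| < ε := by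
      intro ε hε
      obtain ⟨t, ht0, htε⟩ := ray_liminf hlip hKpos hsq_ne_top (Φ x₀) (Φ_mp x₀) (Φ_dist x₀) ε hε
      refine ⟨t, ht0, ?_⟩
      have hΦ0 : Φ x₀ (t, 0) = x₀ + t • e0 := by simp [Φ]
      rwa [hΦ0] at htε
    have hkey := key hgd hg'c 2 hlim
    have hmain : ENNReal.ofReal (|θ x₀| ^ 3) ≤
        ENNReal.ofReal (3 * Lr) * ∫⁻ t in Set.Ioi (0:ℝ), ENNReal.ofReal (|g t| ^ 2) ∂volume := by
      calc ENNReal.ofReal (|θ x₀| ^ 3)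
          = ENNReal.ofReal (|g 0| ^ (2+1)) := by
            rw [show g 0 = θ x₀ by simp [hg]]
        _ ≤ ∫⁻ t in Set.Ioi (0:ℝ), ENNReal.ofReal ((((2:ℕ):ℝ) + 1) * |g t| ^ 2 * |g' t|) := hkey
        _ ≤ ∫⁻ t in Set.Ioi (0:ℝ), ENNReal.ofReal (3 * Lr) * ENNReal.ofReal (|g t| ^ 2) := by
            refine lintegral_mono fun t => ?_
            rw [← ENNReal.ofReal_mul (by positivity)]
            apply ENNReal.ofReal_le_ofReal
            have hb : |g' t| ≤ Lr := by
              rw [hg']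
              calc |D (x₀ + t • e0) e0| ≤ ‖D (x₀ + t • e0)‖ * ‖e0‖ :=
                    (D (x₀ + t • e0)).le_opNorm e0
                _ = ‖D (x₀ + t • e0)‖ := by rw [norm_e0, mul_one]
                _ ≤ Lr := hDleR _
            have h0 : (0:ℝ) ≤ |g t| := abs_nonneg _
            push_cast
            nlinarith [abs_nonneg (g' t), sq_nonneg (g t)]
        _ = ENNReal.ofReal (3 * Lr) * ∫⁻ t in Set.Ioi (0:ℝ), ENNReal.ofReal (|g t| ^ 2) ∂volume :=
            lintegral_const_mul' _ _ ENNReal.ofReal_ne_top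
    refine hmain.trans ?_
    have hsub : ∀ t : ℝ, ∫⁻ s : ℝ, 2 * F ((x₀ + t • e0) + s • e1) ∂volume
        = ∫⁻ s : ℝ, 2 * F (Φ x₀ (t, s)) ∂volume := by
      intro t
      congr 1
      funext s
      rw [show (x₀ + t • e0) + s • e1 = Φ x₀ (t, s) by rw [Φ]; abel]
    have hstep : (∫⁻ t in Set.Ioi (0:ℝ), ENNReal.ofReal (|g t| ^ 2) ∂volume)
        ≤ 2 * I := by
      calc (∫⁻ t in Set.Ioi (0:ℝ), ENNReal.ofReal (|g t| ^ 2) ∂volume)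
          ≤ ∫⁻ t in Set.Ioi (0:ℝ), (∫⁻ s : ℝ, 2 * F (Φ x₀ (t, s)) ∂volume) ∂volume := by
            refine lintegral_mono fun t => ?_
            rw [← hsub t]
            exact hvert (x₀ + t • e0)
        _ ≤ ∫⁻ t : ℝ, (∫⁻ s : ℝ, 2 * F (Φ x₀ (t, s)) ∂volume) ∂volume :=
            setLIntegral_le_lintegral _ _
        _ = ∫⁻ z : ℝ × ℝ, 2 * F (Φ x₀ z) ∂((volume : Measure ℝ).prod volume) :=
            (lintegral_prod _
              (((hFc.comp (Φ_cont x₀)).measurable.const_mul 2).aemeasurable)).symm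
        _ = ∫⁻ x, 2 * F x ∂volume := (Φ_mp x₀).lintegral_comp
            (hFc.measurable.const_mul 2)
        _ = 2 * I := by rw [hI, lintegral_const_mul' _ _ (by norm_num)]
    calc ENNReal.ofReal (3 * Lr) * ∫⁻ t in Set.Ioi (0:ℝ), ENNReal.ofReal (|g t| ^ 2) ∂volume
        ≤ ENNReal.ofReal (3 * Lr) * (2 * I) := mul_le_mul_right hstep _
      _ ≤ (3 * L) * (2 * I) := by
          refine mul_le_mul_left ?_ _
          rw [ENNReal.ofReal_mul (by norm_num), hLr, ENNReal.ofReal_toReal hLne]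
          simp
      _ = 6 * L * I := by ring
  -- convert pointwise bound to nnnorm form
  have hpt' : ∀ x : E2, (‖θ x‖₊ : ℝ≥0∞) ≤ (6 * L * I) ^ ((3:ℝ)⁻¹) := by
    intro x
    have h1 : ((‖θ x‖₊ : ℝ≥0∞)) ^ (3:ℕ) ≤ 6 * L * I := by
      have h2 : ((‖θ x‖₊ : ℝ≥0∞)) ^ (3:ℕ) = ENNReal.ofReal (|θ x| ^ 3) := by
        rw [ENNReal.ofReal_pow (abs_nonneg _), ← enorm_eq_nnnorm, Real.enorm_eq_ofReal_abs]
      rw [h2]; exact hpt x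
    calc (‖θ x‖₊ : ℝ≥0∞) = (((‖θ x‖₊ : ℝ≥0∞)) ^ (3:ℕ)) ^ ((3:ℝ)⁻¹) := by
          rw [← ENNReal.rpow_natCast _ 3, ← ENNReal.rpow_mul]
          norm_num
      _ ≤ (6 * L * I) ^ ((3:ℝ)⁻¹) := ENNReal.rpow_le_rpow h1 (by norm_num)
  have hm : eLpNorm θ ⊤ volume ≤ (6 * L * I) ^ ((3:ℝ)⁻¹) := by
    rw [eLpNorm_exponent_top]
    exact essSup_le_of_ae_le _ (Filter.Eventually.of_forall hpt')
  -- Hölder / Cauchy-Schwarz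
  have hHolder : I ≤ eLpNorm θ 2 volume * eLpNorm (fun x => fderiv ℝ θ x) 2 volume := by
    have hconj : Real.HolderConjugate 2 2 := Real.HolderConjugate.two_two
    have h := ENNReal.lintegral_mul_le_Lp_mul_Lq volume hconj
      (ENNReal.continuous_coe.comp hθc.nnnorm).measurable.aemeasurable
      (ENNReal.continuous_coe.comp hDc.nnnorm).measurable.aemeasurable
    rw [hI]
    have he2 : ∀ f : E2 → ℝ≥0∞, (∫⁻ x, f x ^ (2:ℝ) ∂volume) ^ ((1:ℝ)/2)
        = (∫⁻ x, f x ^ (2:ℝ) ∂volume) ^ ((1:ℝ)/2) := fun _ => rfl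
    calc (∫⁻ x, F x ∂volume)
        ≤ (∫⁻ x, (‖θ x‖₊ : ℝ≥0∞) ^ (2:ℝ) ∂volume) ^ ((1:ℝ)/2) *
          (∫⁻ x, (‖D x‖₊ : ℝ≥0∞) ^ (2:ℝ) ∂volume) ^ ((1:ℝ)/2) := h
      _ = eLpNorm θ 2 volume * eLpNorm (fun x => fderiv ℝ θ x) 2 volume := by
          rw [eLpNorm_eq_lintegral_rpow_enorm_toReal two_ne_zero ENNReal.ofNat_ne_top,
            eLpNorm_eq_lintegral_rpow_enorm_toReal two_ne_zero ENNReal.ofNat_ne_top]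
          norm_num [enorm_eq_nnnorm]
          rfl
  -- final bound
  set B : ℝ≥0∞ := eLpNorm θ 2 volume with hB
  set C : ℝ≥0∞ := eLpNorm (fun x => fderiv ℝ θ x) 2 volume with hC
  have hBne : B ≠ ⊤ := hθ2.2.ne
  have hCne : C ≠ ⊤ := hgrad2.2.ne
  have hfinal : eLpNorm θ ⊤ volume ≤
      (6:ℝ≥0∞) ^ ((3:ℝ)⁻¹) * L ^ ((3:ℝ)⁻¹) * B ^ ((3:ℝ)⁻¹) * C ^ ((3:ℝ)⁻¹) := by
    refine hm.trans ?_
    have h1 : 6 * L * I ≤ 6 * L * (B * C) := by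
      exact mul_le_mul_right hHolder _
    refine (ENNReal.rpow_le_rpow h1 (by norm_num)).trans (le_of_eq ?_)
    rw [ENNReal.mul_rpow_of_nonneg _ _ (by norm_num : (0:ℝ) ≤ (3:ℝ)⁻¹),
      ENNReal.mul_rpow_of_nonneg _ _ (by norm_num : (0:ℝ) ≤ (3:ℝ)⁻¹),
      ENNReal.mul_rpow_of_nonneg _ _ (by norm_num : (0:ℝ) ≤ (3:ℝ)⁻¹)]
    ring
  have hofReal : ENNReal.ofReal ((6:ℝ) ^ ((1:ℝ)/3)) = (6:ℝ≥0∞) ^ ((3:ℝ)⁻¹) := by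
    rw [show ((1:ℝ)/3) = (3:ℝ)⁻¹ by norm_num,
      ← ENNReal.ofReal_rpow_of_pos (by norm_num : (0:ℝ) < 6)]
    norm_num
  have hfin : eLpNorm θ ⊤ volume <  ⊤ := by
    refine lt_of_le_of_lt hfinal ?_
    have h6 : (6:ℝ≥0∞) ^ ((3:ℝ)⁻¹) < ⊤ :=
      ENNReal.rpow_lt_top_of_nonneg (by norm_num) (by norm_num)
    have hLlt : L ^ ((3:ℝ)⁻¹) < ⊤ := ENNReal.rpow_lt_top_of_nonneg (by norm_num) hLne
    have hBlt : B ^ ((3:ℝ)⁻¹) < ⊤ := ENNReal.rpow_lt_top_of_nonneg (by norm_num) hBne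
    have hClt : C ^ ((3:ℝ)⁻¹) < ⊤ := ENNReal.rpow_lt_top_of_nonneg (by norm_num) hCne
    exact ENNReal.mul_lt_top (ENNReal.mul_lt_top (ENNReal.mul_lt_top h6 hLlt) hBlt) hClt
  constructor
  · exact ⟨hθ2.1, hfin⟩
  · rw [hofReal]
    have h13 : (1:ℝ)/3 = (3:ℝ)⁻¹ := by norm_num
    rw [h13]
    exact hfinal

end LinftyAux
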